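/- Suppose the covariate is scalar and constant within each whole-plot: x_{ws} = x_w ∈ ℝ for all s = 1,…,M_w. For † ∈ {wls, ag}, consider the unadjusted factor-based regression and the additive covariate-adjusted factor-based regression that additionally includes x_{ws} (unit regression) or v̂_w((A_w,b)) = α_w·x_w (aggregate regression), assuming full-column-rank design matrices. Then, for every realization of the 2^2 split-plot assignment, the coefficients of (B_{ws}−1/2) and of (A_w−1/2)(B_{ws}−1/2) in the unit regression (respectively of (b−1/2) and (A_w−1/2)(b−1/2) in the aggregate regression) from the covariate-adjusted fit equal those from the unadjusted fit. -/

import Mathlib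

open Finset Matrix Filter
open scoped Classical BigOperators

noncomputable section

namespace SplitPlotPaper

/-- The set of treatment combinations `T = {0,1} × {0,1}`, a pair of the levels of
factor A and factor B. -/
abbrev T : Type := Bool × Bool

section LS

variable {ι κ γ : Type*} [Fintype ι] [Fintype κ] [DecidableEq κ] [Fintype γ] [DecidableEq γ]

/-- The Gram matrix `Dᵀ Π D` of a (weighted) least-squares problem with design matrix `X`
and weights `π`. -/
def gram (X : Matrix ι κ ℝ) (π : ι → ℝ) : Matrix κ κ ℝ :=
  Matrix.of fun k k' => ∑ i, π i * X i k * X i k'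

/-- The (weighted) least-squares coefficient vector `(DᵀΠD)⁻¹ DᵀΠY`. -/
def lsCoef (X : Matrix ι κ ℝ) (π y : ι → ℝ) : κ → ℝ :=
  (gram X π)⁻¹.mulVec fun k => ∑ i, π i * X i k * y i

/-- Residuals of the (weighted) least-squares fit. -/
def lsResid (X : Matrix ι κ ℝ) (π y : ι → ℝ) (i : ι) : ℝ :=
  y i - ∑ k, X i k * lsCoef X π y k

/-- The cluster-robust covariance matrix
`(DᵀΠD)⁻¹ (Σ_c D_cᵀΠ_c e_c e_cᵀ Π_c D_c) (DᵀΠD)⁻¹` for clustering map `c`. -/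
def clusterCov (X : Matrix ι κ ℝ) (π y : ι → ℝ) (c : ι → γ) : Matrix κ κ ℝ :=
  (gram X π)⁻¹ *
    (Matrix.of fun k k' =>
      ∑ g : γ, (∑ i, if c i = g then π i * X i k * lsResid X π y i else 0) *
        (∑ i, if c i = g then π i * X i k' * lsResid X π y i else 0)) *
    (gram X π)⁻¹

/-- The heteroskedasticity-robust (sandwich) covariance matrix. -/
def hcCov (X : Matrix ι κ ℝ) (π y : ι → ℝ) : Matrix κ κ ℝ :=
  (gram X π)⁻¹ *
    (Matrix.of fun k k' => ∑ i, (π i) ^ 2 * (lsResid X π y i) ^ 2 * X i k * X i k') *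
    (gram X π)⁻¹

end LS

/-- A `2²` split-plot design: `W = W0 + W1` whole-plots, whole-plot `w` containing
`M w = M0 w + M1 w` sub-plots, together with fixed potential outcomes `Y`. -/
structure Design where
  W0 : ℕ
  W1 : ℕ
  hW0 : 2 ≤ W0
  hW1 : 2 ≤ W1
  M0 : Fin (W0 + W1) → ℕ
  M1 : Fin (W0 + W1) → ℕ
  hM0 : ∀ w, 2 ≤ M0 w
  hM1 : ∀ w, 2 ≤ M1 w
  Y : (w : Fin (W0 + W1)) → Fin (M0 w + M1 w) → T → ℝ

namespace Design

variable (d : Design)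

/-- Number of whole-plots. -/
abbrev W : ℕ := d.W0 + d.W1

/-- Size of whole-plot `w`. -/
abbrev M (w : Fin d.W) : ℕ := d.M0 w + d.M1 w

/-- Total number of units. -/
def N : ℕ := ∑ w, d.M w

/-- Number of whole-plots assigned level `a` of factor A. -/
def Wa (a : Bool) : ℕ := if a then d.W1 else d.W0

/-- Number of units of whole-plot `w` assigned level `b` of factor B. -/
def Mb (w : Fin d.W) (b : Bool) : ℕ := if b then d.M1 w else d.M0 w

/-- `p_a = W_a / W`. -/
def p (a : Bool) : ℝ := (d.Wa a : ℝ) / (d.W : ℝ)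

/-- `q_{wb} = M_{wb} / M_w`. -/
def q (w : Fin d.W) (b : Bool) : ℝ := (d.Mb w b : ℝ) / (d.M w : ℝ)

/-- Inclusion probability `p_{ws}(z) = p_a q_{wb}` for `z = (a,b)`. -/
def prob (w : Fin d.W) (z : T) : ℝ := d.p z.1 * d.q w z.2

/-- Whole-plot size factor `α_w = W M_w / N`. -/
def alpha (w : Fin d.W) : ℝ := (d.W : ℝ) * (d.M w : ℝ) / (d.N : ℝ)

/-- An assignment: a level of factor A for each whole-plot and a level of factor B
for each unit. -/
abbrev Assign : Type := (Fin d.W → Bool) × ((w : Fin d.W) → Fin (d.M w) → Bool)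

/-- The set of assignments realizable under split-plot randomization: exactly `W1`
whole-plots receive level 1 of factor A, and exactly `M1 w` units of whole-plot `w`
receive level 1 of factor B.  Split-plot randomization is uniform on this set. -/
def Ω : Finset d.Assign :=
  Finset.univ.filter fun ω =>
    ((Finset.univ.filter fun w => ω.1 w = true).card = d.W1) ∧
    (∀ w, (Finset.univ.filter fun s => ω.2 w s = true).card = d.M1 w)

/-- Design-based expectation: average over the uniform distribution on `Ω`. -/
def expect (f : d.Assign → ℝ) : ℝ := (∑ ω ∈ d.Ω, f ω) / (d.Ω.card : ℝ)

/-- Design-based covariance. -/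
def cov (f g : d.Assign → ℝ) : ℝ :=
  d.expect (fun ω => f ω * g ω) - d.expect f * d.expect g

/-- Conditional expectation given an event `E` on assignments. -/
def cexpect (E : d.Assign → Prop) (f : d.Assign → ℝ) : ℝ :=
  (∑ ω ∈ d.Ω.filter E, f ω) / ((d.Ω.filter E).card : ℝ)

/-- Conditional covariance given an event `E` on assignments. -/
def ccov (E : d.Assign → Prop) (f g : d.Assign → ℝ) : ℝ :=
  d.cexpect E (fun ω => f ω * g ω) - d.cexpect E f * d.cexpect E g

/-- Treatment `Z_{ws} = (A_w, B_{ws})` received by unit `(w,s)`. -/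
def Z (ω : d.Assign) (w : Fin d.W) (s : Fin (d.M w)) : T := (ω.1 w, ω.2 w s)

/-- Observed outcome `Y_{ws} = Y_{ws}(Z_{ws})`. -/
def Yobs (ω : d.Assign) (w : Fin d.W) (s : Fin (d.M w)) : ℝ := d.Y w s (d.Z ω w s)

/-- Horvitz–Thompson estimator `Ŷ_ht(z)`. -/
def Yht (ω : d.Assign) (z : T) : ℝ :=
  (d.N : ℝ)⁻¹ * ∑ w, ∑ s, if d.Z ω w s = z then (d.prob w z)⁻¹ * d.Yobs ω w s else 0

/-- `1̂_ht(z)`: the Horvitz–Thompson estimator of the constant 1. -/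
def oneHt (ω : d.Assign) (z : T) : ℝ :=
  (d.N : ℝ)⁻¹ * ∑ w, ∑ s, if d.Z ω w s = z then (d.prob w z)⁻¹ else 0

/-- Hajek estimator `Ŷ_haj(z) = Ŷ_ht(z)/1̂_ht(z)`. -/
def Yhaj (ω : d.Assign) (z : T) : ℝ := d.Yht ω z / d.oneHt ω z

/-- Sample-mean estimator `Ŷ_sm(z)`. -/
def Ysm (ω : d.Assign) (z : T) : ℝ :=
  (∑ w, ∑ s, if d.Z ω w s = z then d.Yobs ω w s else 0) /
    (∑ w, ∑ s, if d.Z ω w s = z then (1 : ℝ) else 0)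

/-- Whole-plot sample mean `Ŷ_w(z)` (zero when whole-plot `w` has no units under `z`). -/
def Yw (ω : d.Assign) (w : Fin d.W) (z : T) : ℝ :=
  (d.Mb w z.2 : ℝ)⁻¹ * ∑ s, if d.Z ω w s = z then d.Yobs ω w s else 0

/-- Scaled whole-plot sample mean `Û_w(z) = α_w Ŷ_w(z)`. -/
def Uw (ω : d.Assign) (w : Fin d.W) (z : T) : ℝ := d.alpha w * d.Yw ω w z

/-- Finite-population average `Ȳ(z)`. -/
def Ybar (z : T) : ℝ := (d.N : ℝ)⁻¹ * ∑ w, ∑ s, d.Y w s z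

/-- Whole-plot average potential outcome `Ȳ_w(z)`. -/
def Ybarw (w : Fin d.W) (z : T) : ℝ := (d.M w : ℝ)⁻¹ * ∑ s, d.Y w s z

/-- Scaled whole-plot total `U_w(z) = α_w Ȳ_w(z)`. -/
def U (w : Fin d.W) (z : T) : ℝ := d.alpha w * d.Ybarw w z

/-- Between whole-plot covariance `S_ht(z,z')`. -/
def Sht (z z' : T) : ℝ :=
  ((d.W : ℝ) - 1)⁻¹ *
    ∑ w, (d.alpha w * d.Ybarw w z - d.Ybar z) * (d.alpha w * d.Ybarw w z' - d.Ybar z')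

/-- Between whole-plot covariance `S_haj(z,z')`. -/
def Shaj (z z' : T) : ℝ :=
  ((d.W : ℝ) - 1)⁻¹ *
    ∑ w, (d.alpha w) ^ 2 * (d.Ybarw w z - d.Ybar z) * (d.Ybarw w z' - d.Ybar z')

/-- Within whole-plot covariance `S_w(z,z')`. -/
def Sw (w : Fin d.W) (z z' : T) : ℝ :=
  ((d.M w : ℝ) - 1)⁻¹ * (d.alpha w) ^ 2 *
    ∑ s, (d.Y w s z - d.Ybarw w z) * (d.Y w s z' - d.Ybarw w z')

/-- Entry `(z,z')` of `H = diag(p₀⁻¹,p₁⁻¹) ⊗ J₂ − J₄`. -/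
def Hmat (z z' : T) : ℝ := (if z.1 = z'.1 then (d.p z.1)⁻¹ else 0) - 1

/-- Entry `(z,z')` of `H_w = diag(p₀⁻¹,p₁⁻¹) ⊗ (diag(q_{w0}⁻¹,q_{w1}⁻¹) − J₂)`,
i.e. `1(a=a')·p_a⁻¹·(q_{wb}⁻¹·1(z=z') − 1)`. -/
def Hw (w : Fin d.W) (z z' : T) : ℝ :=
  if z.1 = z'.1 then (d.p z.1)⁻¹ * ((if z = z' then (d.q w z.2)⁻¹ else 0) - 1) else 0

/-- `Ψ(z,z') = W⁻¹ Σ_w M_w⁻¹ H_w(z,z') S_w(z,z')`. -/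
def Psi (z z' : T) : ℝ := (d.W : ℝ)⁻¹ * ∑ w, (d.M w : ℝ)⁻¹ * d.Hw w z z' * d.Sw w z z'

/-- Sample analog `Ŝ_ht(z,z')` (for `z,z'` sharing the same A-level `z.1`). -/
def ShtHat (ω : d.Assign) (z z' : T) : ℝ :=
  ((d.Wa z.1 : ℝ) - 1)⁻¹ *
    ∑ w, if ω.1 w = z.1 then
        (d.alpha w * d.Yw ω w z - d.Yht ω z) * (d.alpha w * d.Yw ω w z' - d.Yht ω z')
      else 0

/-- Sample analog `Ŝ_haj(z,z')` (for `z,z'` sharing the same A-level `z.1`). -/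
def ShajHat (ω : d.Assign) (z z' : T) : ℝ :=
  ((d.Wa z.1 : ℝ) - 1)⁻¹ *
    ∑ w, if ω.1 w = z.1 then
        (d.alpha w) ^ 2 * (d.Yw ω w z - d.Yhaj ω z) * (d.Yw ω w z' - d.Yhaj ω z')
      else 0

/-- Covariance estimator `V̂_ht` (block-diagonal in the A-levels). -/
def Vht (ω : d.Assign) : Matrix T T ℝ :=
  Matrix.of fun z z' => if z.1 = z'.1 then (d.Wa z.1 : ℝ)⁻¹ * d.ShtHat ω z z' else 0

/-- Covariance estimator `V̂_haj` (block-diagonal in the A-levels). -/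
def Vhaj (ω : d.Assign) : Matrix T T ℝ :=
  Matrix.of fun z z' => if z.1 = z'.1 then (d.Wa z.1 : ℝ)⁻¹ * d.ShajHat ω z z' else 0

/-- Index set of units. -/
abbrev Idx : Type := (w : Fin d.W) × Fin (d.M w)

/-- Design matrix of the unit regression on the four treatment indicators. -/
def Dunit (ω : d.Assign) : Matrix d.Idx T ℝ :=
  Matrix.of fun i z => if d.Z ω i.1 i.2 = z then 1 else 0

/-- Observed outcome vector, indexed by units. -/
def Yv (ω : d.Assign) : d.Idx → ℝ := fun i => d.Yobs ω i.1 i.2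

/-- Inverse-probability weights `p_{ws}(Z_{ws})⁻¹`. -/
def wgt (ω : d.Assign) : d.Idx → ℝ := fun i => (d.prob i.1 (d.Z ω i.1 i.2))⁻¹

/-- Index set of the aggregate regression: pairs `(w,b)`. -/
abbrev AgIdx : Type := Fin d.W × Bool

/-- Design matrix of the aggregate regression on the four treatment indicators. -/
def Dag (ω : d.Assign) : Matrix d.AgIdx T ℝ :=
  Matrix.of fun i z => if (ω.1 i.1, i.2) = z then 1 else 0

/-- Outcome vector of the aggregate regression: `Û_w((A_w, b))`. -/
def Uag (ω : d.Assign) : d.AgIdx → ℝ := fun i => d.Uw ω i.1 (ω.1 i.1, i.2)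

/-- Clustering of units by whole-plot. -/
def clUnit : d.Idx → Fin d.W := fun i => i.1

/-- Clustering of aggregate observations by whole-plot. -/
def clAg : d.AgIdx → Fin d.W := fun i => i.1

/-- OLS coefficients `β_ols` of the unit regression. -/
def betaOls (ω : d.Assign) : T → ℝ := lsCoef (d.Dunit ω) (fun _ => 1) (d.Yv ω)

/-- WLS coefficients `β_wls` of the unit regression with inverse probability weights. -/
def betaWls (ω : d.Assign) : T → ℝ := lsCoef (d.Dunit ω) (d.wgt ω) (d.Yv ω)

/-- OLS coefficients `β_ag` of the aggregate regression. -/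
def betaAg (ω : d.Assign) : T → ℝ := lsCoef (d.Dag ω) (fun _ => 1) (d.Uag ω)

/-- Cluster-robust covariance `Ṽ_ols` of the unweighted unit regression. -/
def Vols (ω : d.Assign) : Matrix T T ℝ :=
  clusterCov (d.Dunit ω) (fun _ => 1) (d.Yv ω) d.clUnit

/-- Cluster-robust covariance `Ṽ_wls` of the weighted unit regression. -/
def Vwls (ω : d.Assign) : Matrix T T ℝ :=
  clusterCov (d.Dunit ω) (d.wgt ω) (d.Yv ω) d.clUnit

/-- Cluster-robust covariance `Ṽ_ag` of the aggregate regression. -/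
def VagCR (ω : d.Assign) : Matrix T T ℝ :=
  clusterCov (d.Dag ω) (fun _ => 1) (d.Uag ω) d.clAg

section Covariates

variable {J : ℕ}

/-- Horvitz–Thompson estimator of the covariate means. -/
def xht (x : (w : Fin d.W) → Fin (d.M w) → Fin J → ℝ) (ω : d.Assign) (z : T) (j : Fin J) : ℝ :=
  (d.N : ℝ)⁻¹ * ∑ w, ∑ s, if d.Z ω w s = z then (d.prob w z)⁻¹ * x w s j else 0

/-- Hajek estimator of the covariate means. -/
def xhaj (x : (w : Fin d.W) → Fin (d.M w) → Fin J → ℝ) (ω : d.Assign) (z : T) (j : Fin J) : ℝ :=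
  d.xht x ω z j / d.oneHt ω z

/-- Sample-mean estimator of the covariate means. -/
def xsm (x : (w : Fin d.W) → Fin (d.M w) → Fin J → ℝ) (ω : d.Assign) (z : T) (j : Fin J) : ℝ :=
  (∑ w, ∑ s, if d.Z ω w s = z then x w s j else 0) /
    (∑ w, ∑ s, if d.Z ω w s = z then (1 : ℝ) else 0)

/-- Whole-plot sample mean of the covariates `x̂_w(z)`. -/
def xw (x : (w : Fin d.W) → Fin (d.M w) → Fin J → ℝ) (ω : d.Assign) (w : Fin d.W) (z : T)
    (j : Fin J) : ℝ :=
  (d.Mb w z.2 : ℝ)⁻¹ * ∑ s, if d.Z ω w s = z then x w s j else 0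

/-- Scaled whole-plot covariate total `v̂_w(z) = α_w x̂_w(z)`. -/
def vw (x : (w : Fin d.W) → Fin (d.M w) → Fin J → ℝ) (ω : d.Assign) (w : Fin d.W) (z : T)
    (j : Fin J) : ℝ :=
  d.alpha w * d.xw x ω w z j

/-- Design matrix of the additive covariate-adjusted unit regression. -/
def DunitF (x : (w : Fin d.W) → Fin (d.M w) → Fin J → ℝ) (ω : d.Assign) :
    Matrix d.Idx (T ⊕ Fin J) ℝ :=
  Matrix.of fun i k =>
    Sum.elim (fun z => if d.Z ω i.1 i.2 = z then (1 : ℝ) else 0) (fun j => x i.1 i.2 j) k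

/-- Design matrix of the additive covariate-adjusted aggregate regression. -/
def DagF (x : (w : Fin d.W) → Fin (d.M w) → Fin J → ℝ) (ω : d.Assign) :
    Matrix d.AgIdx (T ⊕ Fin J) ℝ :=
  Matrix.of fun i k =>
    Sum.elim (fun z => if (ω.1 i.1, i.2) = z then (1 : ℝ) else 0)
      (fun j => d.vw x ω i.1 (ω.1 i.1, i.2) j) k

/-- Design matrix of the fully-interacted covariate-adjusted unit regression. -/
def DunitL (x : (w : Fin d.W) → Fin (d.M w) → Fin J → ℝ) (ω : d.Assign) :
    Matrix d.Idx (T ⊕ T × Fin J) ℝ :=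
  Matrix.of fun i k =>
    Sum.elim (fun z => if d.Z ω i.1 i.2 = z then (1 : ℝ) else 0)
      (fun zj => if d.Z ω i.1 i.2 = zj.1 then x i.1 i.2 zj.2 else 0) k

/-- Design matrix of the fully-interacted covariate-adjusted aggregate regression. -/
def DagL (x : (w : Fin d.W) → Fin (d.M w) → Fin J → ℝ) (ω : d.Assign) :
    Matrix d.AgIdx (T ⊕ T × Fin J) ℝ :=
  Matrix.of fun i k =>
    Sum.elim (fun z => if (ω.1 i.1, i.2) = z then (1 : ℝ) else 0)
      (fun zj => if (ω.1 i.1, i.2) = zj.1 then d.vw x ω i.1 (ω.1 i.1, i.2) zj.2 else 0) k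

end Covariates

/-- Centered factor-A indicator `A_w − 1/2`. -/
def Ac (ω : d.Assign) (w : Fin d.W) : ℝ := (if ω.1 w then 1 else 0) - 1 / 2

/-- Centered factor-B indicator `B_{ws} − 1/2`. -/
def Bcu (ω : d.Assign) (i : d.Idx) : ℝ := (if ω.2 i.1 i.2 then 1 else 0) - 1 / 2

/-- Design matrix of the factor-based unit regression
`Y ~ 1 + (A−1/2) + (B−1/2) + (A−1/2)(B−1/2)`. -/
def Funit (ω : d.Assign) : Matrix d.Idx (Fin 4) ℝ :=
  Matrix.of fun i => ![1, d.Ac ω i.1, d.Bcu ω i, d.Ac ω i.1 * d.Bcu ω i]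

/-- Design matrix of the factor-based aggregate regression
`Û ~ 1 + (A−1/2) + (b−1/2) + (A−1/2)(b−1/2)`. -/
def Fag (ω : d.Assign) : Matrix d.AgIdx (Fin 4) ℝ :=
  Matrix.of fun i =>
    ![1, d.Ac ω i.1, (if i.2 then 1 else 0) - 1 / 2,
      d.Ac ω i.1 * ((if i.2 then 1 else 0) - 1 / 2)]

end Design

/-- The contrast matrix `G₀` with rows `g_A`, `g_B`, `g_AB`. -/
def G0 : Matrix (Fin 3) T ℝ :=
  Matrix.of fun k z =>
    ![(if z.1 then (1 : ℝ) else -1) / 2,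
      (if z.2 then (1 : ℝ) else -1) / 2,
      (if z.1 then (-1 : ℝ) else 1) * (if z.2 then (-1 : ℝ) else 1)] k


namespace Design

variable (d : Design)

/-- Design matrix of the additive covariate-adjusted factor-based unit regression
`Y ~ 1 + (A−1/2) + (B−1/2) + (A−1/2)(B−1/2) + x`, with a scalar covariate that is
constant within each whole-plot. -/
def Funit5 (x : Fin d.W → ℝ) (ω : d.Assign) : Matrix d.Idx (Fin 5) ℝ :=
  Matrix.of fun i =>
    ![1, d.Ac ω i.1, d.Bcu ω i, d.Ac ω i.1 * d.Bcu ω i, x i.1]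

/-- Design matrix of the additive covariate-adjusted factor-based aggregate regression
`Û ~ 1 + (A−1/2) + (b−1/2) + (A−1/2)(b−1/2) + v̂`, where `v̂_w((A_w,b)) = α_w x_w` for a
scalar covariate constant within each whole-plot. -/
def Fag5 (x : Fin d.W → ℝ) (ω : d.Assign) : Matrix d.AgIdx (Fin 5) ℝ :=
  Matrix.of fun i =>
    ![1, d.Ac ω i.1, (if i.2 then 1 else 0) - 1 / 2,
      d.Ac ω i.1 * ((if i.2 then 1 else 0) - 1 / 2), d.alpha i.1 * x i.1]

end Design


/-! ### Auxiliary lemmas for Statement 19 -/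

section Aux

lemma tri_comm {ι κ' : Type*} [Fintype ι] [Fintype κ'] (F : κ' → κ' → ι → ℝ) :
    (∑ k, ∑ k', ∑ i, F k k' i) = ∑ i, ∑ k, ∑ k', F k k' i := by
  calc (∑ k, ∑ k', ∑ i, F k k' i) = ∑ k, ∑ i, ∑ k', F k k' i :=
        Finset.sum_congr rfl fun _ _ => Finset.sum_comm
    _ = ∑ i, ∑ k, ∑ k', F k k' i := Finset.sum_comm

lemma gram_comm {ι κ : Type*} [Fintype ι] [Fintype κ] [DecidableEq κ]
    (X : Matrix ι κ ℝ) (π : ι → ℝ) (k k' : κ) : gram X π k k' = gram X π k' k :=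
  Finset.sum_congr rfl fun i _ => by ring

lemma isUnit_gram_submatrix {ι κ κ' : Type*} [Fintype ι] [Fintype κ] [DecidableEq κ]
    [Fintype κ'] [DecidableEq κ']
    (X : Matrix ι κ ℝ) (π : ι → ℝ) (hπ : ∀ i, 0 < π i)
    (hdet : IsUnit (gram X π).det) (f : κ' → κ) (hf : Function.Injective f) :
    IsUnit (gram (X.submatrix id f) π).det := by
  rw [isUnit_iff_ne_zero] at hdet ⊢
  intro h0
  obtain ⟨v, hv, hMv⟩ := (Matrix.exists_mulVec_eq_zero_iff).mpr h0
  have hquad : (0:ℝ) = ∑ i, π i * (∑ k, X i (f k) * v k) ^ 2 := by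
    have h1 : v ⬝ᵥ (gram (X.submatrix id f) π).mulVec v = 0 := by rw [hMv]; simp
    rw [← h1]
    unfold gram dotProduct Matrix.mulVec
    simp only [Matrix.of_apply, Matrix.submatrix_apply, id_eq, dotProduct]
    calc ∑ k, v k * ∑ k', (∑ i, π i * X i (f k) * X i (f k')) * v k'
        = ∑ k, ∑ k', ∑ i, v k * (π i * X i (f k) * X i (f k')) * v k' := by
          refine Finset.sum_congr rfl fun k _ => ?_
          rw [Finset.mul_sum]
          refine Finset.sum_congr rfl fun k' _ => ?_
          rw [Finset.sum_mul, Finset.mul_sum]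
          exact Finset.sum_congr rfl fun i _ => by ring
      _ = ∑ i, ∑ k, ∑ k', v k * (π i * X i (f k) * X i (f k')) * v k' := tri_comm _
      _ = ∑ i, π i * (∑ k, X i (f k) * v k) ^ 2 := by
          refine Finset.sum_congr rfl fun i _ => ?_
          rw [sq, Finset.sum_mul_sum, Finset.mul_sum]
          refine Finset.sum_congr rfl fun k _ => ?_
          rw [Finset.mul_sum]
          exact Finset.sum_congr rfl fun k' _ => by ring
  have hkey : ∀ i, ∑ k, X i (f k) * v k = 0 := by
    intro i
    have hle : ∀ j ∈ Finset.univ, (0:ℝ) ≤ π j * (∑ k, X j (f k) * v k) ^ 2 :=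
      fun j _ => mul_nonneg (hπ j).le (sq_nonneg _)
    have h2 := (Finset.sum_eq_zero_iff_of_nonneg hle).mp hquad.symm i (Finset.mem_univ i)
    have h3 := (mul_eq_zero.mp h2).resolve_left (hπ i).ne'
    exact pow_eq_zero_iff (two_ne_zero) |>.mp h3
  set u : κ → ℝ := fun j => ∑ k, if f k = j then v k else 0 with hu
  have hXu : ∀ i, ∑ j, X i j * u j = ∑ k, X i (f k) * v k := by
    intro i
    calc ∑ j, X i j * u j = ∑ j, ∑ k, if f k = j then X i j * v k else 0 := by
          refine Finset.sum_congr rfl fun j _ => ?_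
          rw [hu, Finset.mul_sum]
          exact Finset.sum_congr rfl fun k _ => by rw [mul_ite, mul_zero]
      _ = ∑ k, ∑ j, if f k = j then X i j * v k else 0 := Finset.sum_comm
      _ = ∑ k, X i (f k) * v k := by
          refine Finset.sum_congr rfl fun k _ => ?_
          rw [Finset.sum_ite_eq]
          simp
  have hguz : (gram X π).mulVec u = 0 := by
    funext j'
    unfold gram Matrix.mulVec dotProduct
    simp only [Matrix.of_apply, Pi.zero_apply]
    calc ∑ j, (∑ i, π i * X i j' * X i j) * u j
        = ∑ j, ∑ i, π i * X i j' * X i j * u j := by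
          exact Finset.sum_congr rfl fun j _ => by rw [Finset.sum_mul]
      _ = ∑ i, ∑ j, π i * X i j' * X i j * u j := Finset.sum_comm
      _ = ∑ i, π i * X i j' * ∑ j, X i j * u j := by
          refine Finset.sum_congr rfl fun i _ => ?_
          rw [Finset.mul_sum]
          exact Finset.sum_congr rfl fun j _ => by ring
      _ = 0 := Finset.sum_eq_zero fun i _ => by rw [hXu, hkey, mul_zero]
  have hune : u ≠ 0 := by
    obtain ⟨k, hk⟩ := Function.ne_iff.mp hv
    intro h
    apply hk
    have h4 : u (f k) = v k := by
      rw [hu]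
      show (∑ k', if f k' = f k then v k' else 0) = v k
      rw [Finset.sum_eq_single k]
      · simp
      · intro k' _ hk'; simp [hf.ne hk']
      · simp
    rw [h] at h4; simpa using h4.symm
  exact hdet ((Matrix.exists_mulVec_eq_zero_iff).mp ⟨u, hune, hguz⟩)

lemma coef23_eq {ι : Type*} [Fintype ι] (X5 : Matrix ι (Fin 5) ℝ) (X4 : Matrix ι (Fin 4) ℝ)
    (π y : ι → ℝ) (hπ : ∀ i, 0 < π i)
    (hcols : ∀ i k, X4 i k = X5 i (Fin.castSucc k))
    (hdet : IsUnit (gram X5 π).det)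
    (h20 : gram X5 π 2 0 = 0) (h21 : gram X5 π 2 1 = 0) (h24 : gram X5 π 2 4 = 0)
    (h30 : gram X5 π 3 0 = 0) (h31 : gram X5 π 3 1 = 0) (h34 : gram X5 π 3 4 = 0) :
    lsCoef X5 π y 2 = lsCoef X4 π y 2 ∧ lsCoef X5 π y 3 = lsCoef X4 π y 3 := by
  have hX4 : X4 = X5.submatrix id Fin.castSucc := by
    ext i k; simp [hcols, Matrix.submatrix_apply]
  have hdet4 : IsUnit (gram X4 π).det := by
    rw [hX4]; exact isUnit_gram_submatrix X5 π hπ hdet _ (Fin.castSucc_injective 4)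
  set f2 : Fin 2 → Fin 5 := ![2, 3] with hf2
  have hf2i : Function.Injective f2 := by decide
  have hdet2 : IsUnit (gram (X5.submatrix id f2) π).det :=
    isUnit_gram_submatrix X5 π hπ hdet f2 hf2i
  set a := gram X5 π 2 2 with ha
  set b := gram X5 π 2 3 with hb
  set c := gram X5 π 3 3 with hc
  have hsub : ∀ k k', gram (X5.submatrix id f2) π k k' = gram X5 π (f2 k) (f2 k') := by
    intro k k'; rfl
  have hdet2' : a * c - b * b ≠ 0 := by
    have := hdet2
    rw [Matrix.det_fin_two, hsub, hsub, hsub, hsub] at this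
    have e0 : f2 0 = 2 := rfl
    have e1 : f2 1 = 3 := rfl
    rw [e0, e1] at this
    rw [gram_comm X5 π 3 2] at this
    rw [isUnit_iff_ne_zero] at this
    simpa [← ha, ← hb, ← hc] using this
  set β5 := lsCoef X5 π y with hβ5
  set β4 := lsCoef X4 π y with hβ4
  have key5 : (gram X5 π).mulVec β5 = fun k => ∑ i, π i * X5 i k * y i := by
    rw [hβ5, lsCoef, Matrix.mulVec_mulVec, Matrix.mul_nonsing_inv _ hdet, Matrix.one_mulVec]
  have key4 : (gram X4 π).mulVec β4 = fun k => ∑ i, π i * X4 i k * y i := by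
    rw [hβ4, lsCoef, Matrix.mulVec_mulVec, Matrix.mul_nonsing_inv _ hdet4, Matrix.one_mulVec]
  have g32 : gram X5 π 3 2 = b := by rw [hb]; exact gram_comm X5 π 3 2
  have row5_2 := congrFun key5 2
  have row5_3 := congrFun key5 3
  rw [Matrix.mulVec, dotProduct, Fin.sum_univ_five] at row5_2 row5_3
  rw [h20, h21, h24, ← ha, ← hb] at row5_2
  rw [h30, h31, g32, h34, ← hc] at row5_3
  have hg4 : ∀ (k k' : Fin 4), gram X4 π k k' = gram X5 π (Fin.castSucc k) (Fin.castSucc k') := by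
    intro k k'
    exact Finset.sum_congr rfl fun i _ => by rw [hcols, hcols]
  have c2 : Fin.castSucc (2 : Fin 4) = (2 : Fin 5) := rfl
  have c3 : Fin.castSucc (3 : Fin 4) = (3 : Fin 5) := rfl
  have c0 : Fin.castSucc (0 : Fin 4) = (0 : Fin 5) := rfl
  have c1 : Fin.castSucc (1 : Fin 4) = (1 : Fin 5) := rfl
  have row4_2 := congrFun key4 2
  have row4_3 := congrFun key4 3
  rw [Matrix.mulVec, dotProduct, Fin.sum_univ_four] at row4_2 row4_3
  rw [hg4 2 0, hg4 2 1, hg4 2 2, hg4 2 3] at row4_2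
  rw [hg4 3 0, hg4 3 1, hg4 3 2, hg4 3 3] at row4_3
  rw [c0, c1, c2, c3] at row4_2 row4_3
  rw [h20, h21, ← ha, ← hb] at row4_2
  rw [h30, h31, g32, ← hc] at row4_3
  have hr2 : (∑ i, π i * X4 i 2 * y i) = ∑ i, π i * X5 i 2 * y i :=
    Finset.sum_congr rfl fun i _ => by rw [hcols i 2, c2]
  have hr3 : (∑ i, π i * X4 i 3 * y i) = ∑ i, π i * X5 i 3 * y i :=
    Finset.sum_congr rfl fun i _ => by rw [hcols i 3, c3]
  rw [hr2] at row4_2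
  rw [hr3] at row4_3
  set u := β5 2 - β4 2 with hu
  set v := β5 3 - β4 3 with hv
  have e1 : a * u + b * v = 0 := by
    rw [hu, hv]; linarith [row5_2, row4_2]
  have e2 : b * u + c * v = 0 := by
    rw [hu, hv]; linarith [row5_3, row4_3]
  have hu0 : u = 0 := by
    have h : (a * c - b * b) * u = 0 := by linear_combination c * e1 - b * e2
    exact (mul_eq_zero.mp h).resolve_left hdet2'
  have hv0 : v = 0 := by
    have h : (a * c - b * b) * v = 0 := by linear_combination a * e2 - b * e1
    exact (mul_eq_zero.mp h).resolve_left hdet2'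
  exact ⟨sub_eq_zero.mp (by rw [← hu]; exact hu0), sub_eq_zero.mp (by rw [← hv]; exact hv0)⟩

namespace Design

variable (d : Design)

lemma wgt_pos (ω : d.Assign) (i : d.Idx) : 0 < d.wgt ω i := by
  rw [wgt, Z, prob]
  have hWa : 0 < d.Wa (ω.1 i.1) := by
    rw [Wa]; cases ω.1 i.1 <;> simp <;> [exact lt_of_lt_of_le two_pos d.hW0;
      exact lt_of_lt_of_le two_pos d.hW1]
  have hW : 0 < d.W := by
    have h1 := d.hW0; have h2 := d.hW1
    have : d.W = d.W0 + d.W1 := rfl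
    omega
  have hMb : 0 < d.Mb i.1 (ω.2 i.1 i.2) := by
    rw [Mb]; cases ω.2 i.1 i.2 <;> simp <;> [exact lt_of_lt_of_le two_pos (d.hM0 i.1);
      exact lt_of_lt_of_le two_pos (d.hM1 i.1)]
  have hM : 0 < d.M i.1 := by
    have h1 := d.hM0 i.1; have h2 := d.hM1 i.1
    have : d.M i.1 = d.M0 i.1 + d.M1 i.1 := rfl
    omega
  refine inv_pos.mpr (mul_pos ?_ ?_)
  · exact div_pos (by exact_mod_cast hWa) (by exact_mod_cast hW)
  · exact div_pos (by exact_mod_cast hMb) (by exact_mod_cast hM)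

lemma core_sum (ω : d.Assign) (hω : ω ∈ d.Ω) (w : Fin d.W) :
    ∑ s : Fin (d.M w), (d.q w (ω.2 w s))⁻¹ * ((if ω.2 w s then (1:ℝ) else 0) - 1/2) = 0 := by
  obtain ⟨-, -, hB⟩ := Finset.mem_filter.mp hω
  set f : Bool → ℝ := fun b => (d.q w b)⁻¹ * ((if b then (1:ℝ) else 0) - 1/2) with hf
  have hc1 : (Finset.univ.filter fun s => ω.2 w s = true).card = d.M1 w := hB w
  have hcc := Finset.card_filter_add_card_filter_not
    (s := (Finset.univ : Finset (Fin (d.M w)))) (p := fun s => ω.2 w s = true)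
  rw [Finset.card_univ, Fintype.card_fin, hc1] at hcc
  have hMdef : d.M w = d.M0 w + d.M1 w := rfl
  have hc0 : (Finset.univ.filter fun s => ¬ (ω.2 w s = true)).card = d.M0 w := by omega
  have hA1 : (∑ s ∈ Finset.univ.filter fun s => ω.2 w s = true, f (ω.2 w s))
      = (d.M1 w : ℝ) * f true := by
    have step : ∀ s ∈ Finset.univ.filter fun s => ω.2 w s = true,
        f (ω.2 w s) = f true := by
      intro s hs
      rw [(Finset.mem_filter.mp hs).2]
    rw [Finset.sum_congr rfl step, Finset.sum_const, hc1, nsmul_eq_mul]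
  have hA0 : (∑ s ∈ Finset.univ.filter fun s => ¬ (ω.2 w s = true), f (ω.2 w s))
      = (d.M0 w : ℝ) * f false := by
    have step : ∀ s ∈ Finset.univ.filter fun s => ¬ (ω.2 w s = true),
        f (ω.2 w s) = f false := by
      intro s hs
      have := (Finset.mem_filter.mp hs).2
      rw [Bool.not_eq_true] at this
      rw [this]
    rw [Finset.sum_congr rfl step, Finset.sum_const, hc0, nsmul_eq_mul]
  have hsplit : ∑ s : Fin (d.M w), f (ω.2 w s)
      = (d.M1 w : ℝ) * f true + (d.M0 w : ℝ) * f false := by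
    rw [← Finset.sum_filter_add_sum_filter_not Finset.univ (fun s => ω.2 w s = true), hA1, hA0]
  rw [show (∑ s : Fin (d.M w), (d.q w (ω.2 w s))⁻¹ * ((if ω.2 w s then (1:ℝ) else 0) - 1/2))
      = ∑ s : Fin (d.M w), f (ω.2 w s) from rfl, hsplit]
  have h2M1 := d.hM1 w
  have h2M0 := d.hM0 w
  have hM1 : ((d.M1 w : ℝ)) ≠ 0 := by positivity
  have hM0 : ((d.M0 w : ℝ)) ≠ 0 := by positivity
  have hMpos : (0:ℕ) < d.M w := by have : d.M w = d.M0 w + d.M1 w := rfl; omega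
  have hM : ((d.M w : ℝ)) ≠ 0 := by positivity
  rw [hf]
  simp only [if_true, if_false, Bool.false_eq_true, q, Mb]
  field_simp
  ring

lemma unit_orth (ω : d.Assign) (hω : ω ∈ d.Ω) (c : Fin d.W → ℝ) :
    ∑ i : d.Idx, d.wgt ω i * (c i.1 * d.Bcu ω i) = 0 := by
  rw [← Finset.univ_sigma_univ, Finset.sum_sigma]
  refine Finset.sum_eq_zero fun w _ => ?_
  have hterm : ∀ s : Fin (d.M w), d.wgt ω ⟨w, s⟩ * (c w * d.Bcu ω ⟨w, s⟩)
      = (c w * (d.p (ω.1 w))⁻¹) *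
        ((d.q w (ω.2 w s))⁻¹ * ((if ω.2 w s then (1:ℝ) else 0) - 1/2)) := by
    intro s
    rw [wgt, Z, prob, Bcu, mul_inv]
    ring
  rw [Finset.sum_congr rfl fun s _ => hterm s, ← Finset.mul_sum, d.core_sum ω hω w, mul_zero]

lemma ag_orth (ω : d.Assign) (c : Fin d.W → ℝ) :
    ∑ i : d.AgIdx, c i.1 * ((if i.2 then (1:ℝ) else 0) - 1/2) = 0 := by
  rw [Fintype.sum_prod_type]
  refine Finset.sum_eq_zero fun w _ => ?_
  rw [Fintype.sum_bool]
  simp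
  ring

end Design

end Aux

/-- With a scalar covariate constant within each whole-plot, for the
'wls' unit factor regression and the 'ag' aggregate factor regression, the coefficients
of `(B−1/2)` and of `(A−1/2)(B−1/2)` from the additive covariate-adjusted fit equal
those from the unadjusted fit, for every realization of the assignment (full column
rank of the adjusted design matrices is expressed via invertibility of the Gram
matrices). -/
theorem additive_adjustment_invariance (d : Design) (x : Fin d.W → ℝ)
    (ω : d.Assign) (hω : ω ∈ d.Ω)
    (hrkU : IsUnit (gram (d.Funit5 x ω) (d.wgt ω)).det)
    (hrkA : IsUnit (gram (d.Fag5 x ω) (fun _ => 1)).det) :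
    (lsCoef (d.Funit5 x ω) (d.wgt ω) (d.Yv ω) 2
        = lsCoef (d.Funit ω) (d.wgt ω) (d.Yv ω) 2 ∧
      lsCoef (d.Funit5 x ω) (d.wgt ω) (d.Yv ω) 3
        = lsCoef (d.Funit ω) (d.wgt ω) (d.Yv ω) 3) ∧
    (lsCoef (d.Fag5 x ω) (fun _ => 1) (d.Uag ω) 2
        = lsCoef (d.Fag ω) (fun _ => 1) (d.Uag ω) 2 ∧
      lsCoef (d.Fag5 x ω) (fun _ => 1) (d.Uag ω) 3
        = lsCoef (d.Fag ω) (fun _ => 1) (d.Uag ω) 3) := by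
  constructor
  · -- unit regression
    have hπ : ∀ i, 0 < d.wgt ω i := d.wgt_pos ω
    have hcols : ∀ i k, d.Funit ω i k = d.Funit5 x ω i (Fin.castSucc k) := by
      intro i k; fin_cases k <;> rfl
    have h20 : gram (d.Funit5 x ω) (d.wgt ω) 2 0 = 0 := by
      refine (Finset.sum_congr rfl fun i _ => ?_).trans (d.unit_orth ω hω fun _ => 1)
      show d.wgt ω i * d.Bcu ω i * 1 = d.wgt ω i * (1 * d.Bcu ω i); ring
    have h21 : gram (d.Funit5 x ω) (d.wgt ω) 2 1 = 0 := by
      refine (Finset.sum_congr rfl fun i _ => ?_).trans (d.unit_orth ω hω fun w => d.Ac ω w)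
      show d.wgt ω i * d.Bcu ω i * d.Ac ω i.1 = d.wgt ω i * (d.Ac ω i.1 * d.Bcu ω i); ring
    have h24 : gram (d.Funit5 x ω) (d.wgt ω) 2 4 = 0 := by
      refine (Finset.sum_congr rfl fun i _ => ?_).trans (d.unit_orth ω hω fun w => x w)
      show d.wgt ω i * d.Bcu ω i * x i.1 = d.wgt ω i * (x i.1 * d.Bcu ω i); ring
    have h30 : gram (d.Funit5 x ω) (d.wgt ω) 3 0 = 0 := by
      refine (Finset.sum_congr rfl fun i _ => ?_).trans (d.unit_orth ω hω fun w => d.Ac ω w)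
      show d.wgt ω i * (d.Ac ω i.1 * d.Bcu ω i) * 1
        = d.wgt ω i * (d.Ac ω i.1 * d.Bcu ω i); ring
    have h31 : gram (d.Funit5 x ω) (d.wgt ω) 3 1 = 0 := by
      refine (Finset.sum_congr rfl fun i _ => ?_).trans
        (d.unit_orth ω hω fun w => d.Ac ω w * d.Ac ω w)
      show d.wgt ω i * (d.Ac ω i.1 * d.Bcu ω i) * d.Ac ω i.1
        = d.wgt ω i * (d.Ac ω i.1 * d.Ac ω i.1 * d.Bcu ω i); ring
    have h34 : gram (d.Funit5 x ω) (d.wgt ω) 3 4 = 0 := by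
      refine (Finset.sum_congr rfl fun i _ => ?_).trans
        (d.unit_orth ω hω fun w => d.Ac ω w * x w)
      show d.wgt ω i * (d.Ac ω i.1 * d.Bcu ω i) * x i.1
        = d.wgt ω i * (d.Ac ω i.1 * x i.1 * d.Bcu ω i); ring
    exact coef23_eq (d.Funit5 x ω) (d.Funit ω) (d.wgt ω) (d.Yv ω) hπ
      (fun i k => hcols i k) hrkU h20 h21 h24 h30 h31 h34
  · -- aggregate regression
    have hπ : ∀ i : d.AgIdx, (0:ℝ) < (fun _ => (1:ℝ)) i := fun _ => one_pos
    have hcols : ∀ i k, d.Fag ω i k = d.Fag5 x ω i (Fin.castSucc k) := by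
      intro i k; fin_cases k <;> rfl
    have h20 : gram (d.Fag5 x ω) (fun _ => (1:ℝ)) 2 0 = 0 := by
      refine (Finset.sum_congr rfl fun i _ => ?_).trans (d.ag_orth ω fun _ => 1)
      show 1 * ((if i.2 then (1:ℝ) else 0) - 1/2) * 1
        = 1 * ((if i.2 then (1:ℝ) else 0) - 1/2); ring
    have h21 : gram (d.Fag5 x ω) (fun _ => (1:ℝ)) 2 1 = 0 := by
      refine (Finset.sum_congr rfl fun i _ => ?_).trans (d.ag_orth ω fun w => d.Ac ω w)
      show 1 * ((if i.2 then (1:ℝ) else 0) - 1/2) * d.Ac ω i.1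
        = d.Ac ω i.1 * ((if i.2 then (1:ℝ) else 0) - 1/2); ring
    have h24 : gram (d.Fag5 x ω) (fun _ => (1:ℝ)) 2 4 = 0 := by
      refine (Finset.sum_congr rfl fun i _ => ?_).trans
        (d.ag_orth ω fun w => d.alpha w * x w)
      show 1 * ((if i.2 then (1:ℝ) else 0) - 1/2) * (d.alpha i.1 * x i.1)
        = d.alpha i.1 * x i.1 * ((if i.2 then (1:ℝ) else 0) - 1/2); ring
    have h30 : gram (d.Fag5 x ω) (fun _ => (1:ℝ)) 3 0 = 0 := by
      refine (Finset.sum_congr rfl fun i _ => ?_).trans (d.ag_orth ω fun w => d.Ac ω w)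
      show 1 * (d.Ac ω i.1 * ((if i.2 then (1:ℝ) else 0) - 1/2)) * 1
        = d.Ac ω i.1 * ((if i.2 then (1:ℝ) else 0) - 1/2); ring
    have h31 : gram (d.Fag5 x ω) (fun _ => (1:ℝ)) 3 1 = 0 := by
      refine (Finset.sum_congr rfl fun i _ => ?_).trans
        (d.ag_orth ω fun w => d.Ac ω w * d.Ac ω w)
      show 1 * (d.Ac ω i.1 * ((if i.2 then (1:ℝ) else 0) - 1/2)) * d.Ac ω i.1
        = d.Ac ω i.1 * d.Ac ω i.1 * ((if i.2 then (1:ℝ) else 0) - 1/2); ring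
    have h34 : gram (d.Fag5 x ω) (fun _ => (1:ℝ)) 3 4 = 0 := by
      refine (Finset.sum_congr rfl fun i _ => ?_).trans
        (d.ag_orth ω fun w => d.Ac ω w * (d.alpha w * x w))
      show 1 * (d.Ac ω i.1 * ((if i.2 then (1:ℝ) else 0) - 1/2)) * (d.alpha i.1 * x i.1)
        = d.Ac ω i.1 * (d.alpha i.1 * x i.1) * ((if i.2 then (1:ℝ) else 0) - 1/2); ring
    exact coef23_eq (d.Fag5 x ω) (d.Fag ω) (fun _ => 1) (d.Uag ω) hπ
      (fun i k => hcols i k) hrkA h20 h21 h24 h30 h31 h34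


end SplitPlotPaper
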